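/- If C and D are finite connected racks such that for every finite connected rack E the number of rack morphisms E → C equals the number of rack morphisms E → D, then C and D are isomorphic as racks. -/

import Mathlib

open Quandles

/-- A subrack of a rack `R`: a subset `S` with `ℓ_s(S) = S` for all `s ∈ S`. -/
def IsSubrack {R : Type*} [Rack R] (S : Set R) : Prop :=
  ∀ s ∈ S, (fun b => s ◃ b) '' S = S

/-- The inner automorphism group of a rack: the subgroup of permutations generated by
the left multiplications. -/
def Inn (R : Type*) [Rack R] : Subgroup (Equiv.Perm R) :=
  Subgroup.closure (Set.range (Rack.act' : R → R ≃ R))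

/-- A rack is connected if its inner automorphism group acts transitively on it,
i.e. there is exactly one orbit. -/
def IsConnectedRack (R : Type*) [Rack R] : Prop :=
  Nonempty R ∧ ∀ x y : R, ∃ g ∈ Inn R, g x = y

/-- A decomposition of a rack into two disjoint nonempty subracks. -/
structure IsDecomposition (R : Type*) [Rack R] (S T : Set R) : Prop where
  subrack_left : IsSubrack S
  subrack_right : IsSubrack T
  nonempty_left : S.Nonempty
  nonempty_right : T.Nonempty
  disjoint : Disjoint S T
  union : S ∪ T = Set.univ

/-- Two shelves (racks, quandles) are isomorphic if there is a structure-preserving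
bijection between them. -/
def RackIsomorphic (A B : Type*) [Shelf A] [Shelf B] : Prop :=
  ∃ e : A ≃ B, ∀ x y : A, e (x ◃ y) = e x ◃ e y

/-- The permutation rack on a set `R` given by a permutation `π`: `a ◃ b = π b`. -/
def permRack {R : Type*} (π : Equiv.Perm R) : Rack R where
  act _ b := π b
  self_distrib := rfl
  invAct _ b := π.symm b
  left_inv _ b := π.symm_apply_apply b
  right_inv _ b := π.apply_symm_apply b

/-- The product of two racks, with componentwise operation. -/
instance prodRack {A B : Type*} [Rack A] [Rack B] : Rack (A × B) where
  act x y := (x.1 ◃ y.1, x.2 ◃ y.2)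
  self_distrib := by
    intro x y z
    dsimp only
    rw [Shelf.self_distrib (x := x.1), Shelf.self_distrib (x := x.2)]
  invAct x y := (x.1 ◃⁻¹ y.1, x.2 ◃⁻¹ y.2)
  left_inv x y := by
    dsimp only
    rw [Rack.left_inv x.1 y.1, Rack.left_inv x.2 y.2]
  right_inv x y := by
    dsimp only
    rw [Rack.right_inv x.1 y.1, Rack.right_inv x.2 y.2]

/-- A subrack, with its induced rack structure. -/
def Subrack.rack {R : Type*} [Rack R] (S : Set R) (hS : IsSubrack S) : Rack S where
  act x y := ⟨x.1 ◃ y.1, by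
    have h := hS x.1 x.2
    exact (Set.ext_iff.mp h (x.1 ◃ y.1)).mp ⟨y.1, y.2, rfl⟩⟩
  self_distrib := by
    intro x y z
    exact Subtype.ext Shelf.self_distrib
  invAct x y := ⟨x.1 ◃⁻¹ y.1, by
    have h := hS x.1 x.2
    have hy : (y : R) ∈ (fun b => x.1 ◃ b) '' S := (Set.ext_iff.mp h y.1).mpr y.2
    obtain ⟨u, hu, hequ⟩ := hy
    have : x.1 ◃⁻¹ (y : R) = u := by
      rw [← hequ]; exact Rack.left_inv x.1 u
    rw [this]; exact hu⟩
  left_inv x y := Subtype.ext (Rack.left_inv x.1 y.1)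
  right_inv x y := Subtype.ext (Rack.right_inv x.1 y.1)


section LovaszArgument

open Function

variable {R S T : Type*} [Rack R] [Rack S] [Rack T]

theorem ShelfHom.map_invAct (f : R →◃ S) (x y : R) : f (x ◃⁻¹ y) = f x ◃⁻¹ f y := by
  rw [← Rack.left_cancel (f x), Rack.right_inv, ← ShelfHom.map_act, Rack.right_inv]

/-- A congruence on a rack. -/
structure RackCon (R : Type*) [Rack R] extends Setoid R where
  act_compat : ∀ {a b c d : R}, r a b → r c d → r (a ◃ c) (b ◃ d)
  inv_compat : ∀ {a b c d : R}, r a b → r c d → r (a ◃⁻¹ c) (b ◃⁻¹ d)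

theorem RackCon.ext' {c d : RackCon R} (h : ∀ a b, c.toSetoid a b ↔ d.toSetoid a b) :
    c = d := by
  obtain ⟨cs, hc1, hc2⟩ := c
  obtain ⟨ds, hd1, hd2⟩ := d
  have : cs = ds := Setoid.ext h
  subst this
  rfl

/-- The quotient of a rack by a congruence. -/
def RackCon.Q (c : RackCon R) : Type _ := Quotient c.toSetoid

instance RackCon.instRack (c : RackCon R) : Rack c.Q where
  act := Quotient.map₂ (· ◃ ·) (fun _ _ h _ _ h' => c.act_compat h h')
  invAct := Quotient.map₂ (· ◃⁻¹ ·) (fun _ _ h _ _ h' => c.inv_compat h h')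
  self_distrib := by
    rintro ⟨x⟩ ⟨y⟩ ⟨z⟩
    exact congrArg (Quotient.mk c.toSetoid) Shelf.self_distrib
  left_inv := by
    rintro ⟨x⟩ ⟨y⟩
    exact congrArg (Quotient.mk c.toSetoid) (Rack.left_inv x y)
  right_inv := by
    rintro ⟨x⟩ ⟨y⟩
    exact congrArg (Quotient.mk c.toSetoid) (Rack.right_inv x y)

/-- The projection onto the quotient. -/
def RackCon.proj (c : RackCon R) : R →◃ c.Q where
  toFun := Quotient.mk c.toSetoid
  map_act' := rfl

theorem RackCon.proj_surjective (c : RackCon R) : Surjective c.proj := by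
  rintro ⟨x⟩; exact ⟨x, rfl⟩

instance RackCon.finiteQ (c : RackCon R) [Finite R] : Finite c.Q :=
  Quotient.finite c.toSetoid

instance finiteRackCon [Finite R] : Finite (RackCon R) := by
  have : Injective (fun c : RackCon R => (fun a b => c.toSetoid a b : R → R → Prop)) := by
    intro c d h
    exact RackCon.ext' fun a b => iff_of_eq (congrFun (congrFun h a) b)
  exact Finite.of_injective _ this

instance finiteShelfHom [Finite R] [Finite S] : Finite (R →◃ S) :=
  Finite.of_injective (fun f => (f : R → S)) DFunLike.coe_injective

/-- The kernel congruence of a rack morphism. -/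
def kerCon (f : R →◃ S) : RackCon R where
  r a b := f a = f b
  iseqv := ⟨fun _ => rfl, Eq.symm, Eq.trans⟩
  act_compat := by
    intro a b c d h h'
    show f _ = f _
    rw [ShelfHom.map_act, ShelfHom.map_act, h, h']
  inv_compat := by
    intro a b c d h h'
    show f _ = f _
    rw [ShelfHom.map_invAct, ShelfHom.map_invAct, h, h']

/-- Lift a morphism along a congruence contained in its kernel. -/
def liftHom (c : RackCon R) (f : R →◃ S) (hf : ∀ a b, c.toSetoid a b → f a = f b) :
    c.Q →◃ S where
  toFun := Quotient.lift f hf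
  map_act' := by
    rintro ⟨x⟩ ⟨y⟩
    exact f.map_act

/-- A congruence is trivial if it is equality. -/
def RackCon.Triv (c : RackCon R) : Prop := ∀ a b, c.toSetoid a b → a = b

/-- The trivial congruence. -/
def RackCon.bot (R : Type*) [Rack R] : RackCon R where
  r a b := a = b
  iseqv := ⟨fun _ => rfl, Eq.symm, Eq.trans⟩
  act_compat := by rintro a b c d rfl rfl; rfl
  inv_compat := by rintro a b c d rfl rfl; rfl

instance uniqueTriv : Unique {c : RackCon R // c.Triv} where
  default := ⟨RackCon.bot R, fun _ _ h => h⟩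
  uniq := by
    rintro ⟨c, hc⟩
    refine Subtype.ext (RackCon.ext' fun a b => ⟨hc a b, ?_⟩)
    rintro rfl
    exact c.toSetoid.refl a

/-- Transfer of inner automorphisms along surjective morphisms. -/
theorem exists_inn_map (f : R →◃ S) {g : Equiv.Perm R} (hg : g ∈ Inn R) :
    ∃ h ∈ Inn S, ∀ x, h (f x) = f (g x) := by
  induction hg using Subgroup.closure_induction with
  | mem x hx =>
    obtain ⟨a, rfl⟩ := hx
    refine ⟨Rack.act' (f a), Subgroup.subset_closure ⟨f a, rfl⟩, fun x => ?_⟩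
    simp [Rack.act'_apply]
  | one => exact ⟨1, one_mem _, fun x => rfl⟩
  | mul x y hx hy ihx ihy =>
    obtain ⟨h₁, hh₁, e₁⟩ := ihx
    obtain ⟨h₂, hh₂, e₂⟩ := ihy
    exact ⟨h₁ * h₂, mul_mem hh₁ hh₂, fun z => by
      simp only [Equiv.Perm.mul_apply, e₂, e₁]⟩
  | inv x hx ihx =>
    obtain ⟨h₁, hh₁, e₁⟩ := ihx
    refine ⟨h₁⁻¹, inv_mem hh₁, fun z => ?_⟩
    apply h₁.injective
    rw [← Equiv.Perm.mul_apply h₁ h₁⁻¹, mul_inv_cancel, Equiv.Perm.one_apply, e₁,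
      ← Equiv.Perm.mul_apply x x⁻¹, mul_inv_cancel, Equiv.Perm.one_apply]

theorem connected_of_surjective (f : R →◃ S) (hf : Surjective f)
    (hR : IsConnectedRack R) : IsConnectedRack S := by
  obtain ⟨⟨r0⟩, htrans⟩ := hR
  refine ⟨⟨f r0⟩, fun s t => ?_⟩
  obtain ⟨x, rfl⟩ := hf s
  obtain ⟨y, rfl⟩ := hf t
  obtain ⟨g, hg, hgx⟩ := htrans x y
  obtain ⟨h₁, hh₁, e₁⟩ := exists_inn_map f hg
  exact ⟨h₁, hh₁, by rw [e₁, hgx]⟩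

theorem card_Q_lt (c : RackCon R) [Fintype R] (hc : ¬ c.Triv) :
    Nat.card c.Q < Nat.card R := by
  classical
  simp only [RackCon.Triv, not_forall] at hc
  obtain ⟨a, b, hab, hne⟩ := hc
  letI : Fintype c.Q := Fintype.ofFinite _
  have h1 : Fintype.card (Quotient c.toSetoid) < Fintype.card R :=
    Fintype.card_lt_of_surjective_not_injective _ Quotient.mk_surjective
      (fun hi => hne (hi (Quotient.sound hab)))
  rw [Nat.card_eq_fintype_card, Nat.card_eq_fintype_card]
  convert h1 using 2
  rfl

/-- The fiber of the kernel map over a congruence is equivalent to injective morphisms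
from the quotient. -/
def fiberEquiv (c : RackCon R) :
    {f : R →◃ S // kerCon f = c} ≃ {g : c.Q →◃ S // Injective g} where
  toFun x := ⟨liftHom c x.1 (fun a b hab => by rw [← x.2] at hab; exact hab), by
    rintro ⟨a⟩ ⟨b⟩ hab
    have h1 : (kerCon x.1).toSetoid a b := hab
    rw [x.2] at h1
    exact Quotient.sound h1⟩
  invFun y := ⟨y.1.comp c.proj, by
    refine RackCon.ext' fun a b => ⟨fun h => ?_, fun h => ?_⟩
    · exact Quotient.exact (y.2 h)
    · exact congrArg y.1 (Quotient.sound h)⟩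
  left_inv x := Subtype.ext (DFunLike.ext _ _ fun a => rfl)
  right_inv y := Subtype.ext (DFunLike.ext _ _ (by rintro ⟨a⟩; rfl))

/-- Injective morphisms from the trivial quotient are injective morphisms. -/
def botEquiv :
    {g : (RackCon.bot R).Q →◃ S // Injective g} ≃ {f : R →◃ S // Injective f} where
  toFun y := ⟨y.1.comp (RackCon.bot R).proj, fun a b h => Quotient.exact (y.2 h)⟩
  invFun x := ⟨liftHom _ x.1 (fun a b hab => by rw [show a = b from hab]), by
    rintro ⟨a⟩ ⟨b⟩ hab
    exact Quotient.sound (x.2 hab)⟩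
  left_inv y := Subtype.ext (DFunLike.ext _ _ (by rintro ⟨a⟩; rfl))
  right_inv x := Subtype.ext (DFunLike.ext _ _ fun a => rfl)

/-- Split a sigma type along a predicate on the index. -/
noncomputable def sigmaSplit {ι : Type*} (p : ι → Prop) (F : ι → Type*) :
    (Σ i, F i) ≃ (Σ i : {i // p i}, F i.1) ⊕ (Σ i : {i // ¬ p i}, F i.1) := by
  classical
  exact {
    toFun := fun x => if h : p x.1 then Sum.inl ⟨⟨x.1, h⟩, x.2⟩ else Sum.inr ⟨⟨x.1, h⟩, x.2⟩
    invFun := fun x => match x with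
      | Sum.inl y => ⟨y.1.1, y.2⟩
      | Sum.inr y => ⟨y.1.1, y.2⟩
    left_inv := fun x => by by_cases h : p x.1 <;> simp [h]
    right_inv := fun x => by rcases x with ⟨⟨i, hi⟩, y⟩ | ⟨⟨i, hi⟩, y⟩ <;> simp [hi] }

/-- Sigma over a unique index type. -/
def sigmaUniqueIndex {ι : Type*} [Unique ι] (F : ι → Type*) : (Σ i, F i) ≃ F default where
  toFun x := cast (congrArg F (Unique.eq_default x.1)) x.2
  invFun y := ⟨default, y⟩
  left_inv x := by
    rcases x with ⟨i, y⟩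
    have h := Unique.eq_default i
    subst h
    rfl
  right_inv y := rfl

theorem natcard_sigma_eq {ι : Type*} {F G : ι → Type*} [∀ i, Finite (F i)]
    [∀ i, Finite (G i)] (h : ∀ i, Nat.card (F i) = Nat.card (G i)) :
    Nat.card (Σ i, F i) = Nat.card (Σ i, G i) := by
  have : ∀ i, Nonempty (F i ≃ G i) := fun i => Finite.card_eq.mp (h i)
  exact Nat.card_congr (Equiv.sigmaCongrRight fun i => (this i).some)

theorem card_hom_split (R S : Type*) [Rack R] [Rack S] [Finite R] [Finite S] :
    Nat.card (R →◃ S) =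
      Nat.card {f : R →◃ S // Injective f} +
      Nat.card (Σ c : {c : RackCon R // ¬ c.Triv}, {g : c.1.Q →◃ S // Injective g}) := by
  have e1 : (R →◃ S) ≃ Σ c : RackCon R, {f : R →◃ S // kerCon f = c} :=
    (Equiv.sigmaFiberEquiv (kerCon : (R →◃ S) → RackCon R)).symm
  have e2 : (Σ c : RackCon R, {f : R →◃ S // kerCon f = c}) ≃
      Σ c : RackCon R, {g : c.Q →◃ S // Injective g} :=
    Equiv.sigmaCongrRight fun c => fiberEquiv c
  have e3 := sigmaSplit (fun c : RackCon R => c.Triv)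
    (fun c => {g : c.Q →◃ S // Injective g})
  have e4 : (Σ c : {c : RackCon R // c.Triv}, {g : c.1.Q →◃ S // Injective g}) ≃
      {g : (RackCon.bot R).Q →◃ S // Injective g} :=
    sigmaUniqueIndex (fun c : {c : RackCon R // c.Triv} => {g : c.1.Q →◃ S // Injective g})
  rw [Nat.card_congr ((e1.trans e2).trans e3), Nat.card_sum,
    Nat.card_congr (e4.trans botEquiv)]

end LovaszArgument

universe u

/-- If `C` and `D` are finite connected racks that receive the same number of
rack morphisms from every finite connected rack `E`, then `C ≅ D`. -/
theorem equal_marks_implies_isomorphic {C D : Type u} [Rack C] [Rack D]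
    [Fintype C] [Fintype D]
    (hC : IsConnectedRack C) (hD : IsConnectedRack D)
    (h : ∀ (E : Type u) [Rack E] [Fintype E], IsConnectedRack E →
      Nat.card (E →◃ C) = Nat.card (E →◃ D)) :
    RackIsomorphic C D := by
  classical
  -- first, injective morphism counts agree on all finite connected racks
  have key : ∀ (n : ℕ) (E : Type u) [Rack E] [Fintype E], IsConnectedRack E →
      Nat.card E ≤ n →
      Nat.card {f : E →◃ C // Function.Injective f} =
        Nat.card {f : E →◃ D // Function.Injective f} := by
    intro n
    induction n with
    | zero =>
      intro E _ _ hE hcard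
      obtain ⟨⟨e⟩, -⟩ := hE
      have : 0 < Nat.card E := Nat.card_pos_iff.mpr ⟨⟨e⟩, Finite.of_fintype E⟩
      omega
    | succ n ih =>
      intro E _ _ hE hcard
      have hsplitC := card_hom_split E C
      have hsplitD := card_hom_split E D
      have hsig :
          Nat.card (Σ c : {c : RackCon E // ¬ c.Triv}, {g : c.1.Q →◃ C // Function.Injective g}) =
          Nat.card (Σ c : {c : RackCon E // ¬ c.Triv}, {g : c.1.Q →◃ D // Function.Injective g}) := by
        refine natcard_sigma_eq fun c => ?_
        have hlt : Nat.card c.1.Q < Nat.card E := card_Q_lt c.1 c.2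
        have hQconn : IsConnectedRack c.1.Q :=
          connected_of_surjective c.1.proj c.1.proj_surjective hE
        letI : Fintype c.1.Q := Fintype.ofFinite _
        exact ih c.1.Q hQconn (by omega)
      have hhom := h E hE
      rw [hsplitC, hsplitD, hsig] at hhom
      exact Nat.add_right_cancel hhom
  -- identity gives an injective morphism C → C, hence some injective morphism C → D
  have posC : 0 < Nat.card {f : C →◃ C // Function.Injective f} :=
    Nat.card_pos_iff.mpr ⟨⟨⟨ShelfHom.id C, fun _ _ hab => hab⟩⟩, inferInstance⟩
  have hCD := key (Nat.card C) C hC le_rfl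
  rw [hCD] at posC
  obtain ⟨⟨f, hf⟩⟩ := (Nat.card_pos_iff.mp posC).1
  -- and symmetrically an injective morphism D → C
  have posD : 0 < Nat.card {f : D →◃ D // Function.Injective f} :=
    Nat.card_pos_iff.mpr ⟨⟨⟨ShelfHom.id D, fun _ _ hab => hab⟩⟩, inferInstance⟩
  have hDC := (key (Nat.card D) D hD le_rfl).symm
  rw [hDC] at posD
  obtain ⟨⟨g, hg⟩⟩ := (Nat.card_pos_iff.mp posD).1
  -- so the cardinalities agree and f is bijective
  have hcards : Fintype.card C = Fintype.card D := by
    have h1 : Nat.card C ≤ Nat.card D := Nat.card_le_card_of_injective f hf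
    have h2 : Nat.card D ≤ Nat.card C := Nat.card_le_card_of_injective g hg
    have := le_antisymm h1 h2
    rwa [Nat.card_eq_fintype_card, Nat.card_eq_fintype_card] at this
  have hbij : Function.Bijective f :=
    (Fintype.bijective_iff_injective_and_card f).mpr ⟨hf, hcards⟩
  exact ⟨Equiv.ofBijective f hbij, fun x y => f.map_act⟩
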